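/- arXiv:2504.15864 — 2 statements merged into one kernel-verified Lean document; each statement's English description precedes it below -/
import Mathlib

section
/- Let π > 0 and define g_π : ℝ³ →(−∞, +∞] by g_π(v) = 4/√(s(v)) + π √(s(v)) for v ≠ 0, where s(v) = |v| √(4|v| + π²|v|⁴) − π|v|³ > 0, and g_π(0) = +∞. Then: (i) g_π(v) > 3√(2π) for every v ≠ 0; and (ii) every convex function φ : ℝ³ → ℝ with φ(v) ≤ g_π(v) for all v ≠ 0 satisfies φ(v) ≤ 3√(2π) for every v ∈ ℝ³. In particular, the pointwise supremum over all convex minorants of g_π is the constant function 3√(2π). -/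
noncomputable section

/-- The Euclidean norm on `ℝ³`. -/
def enr (v : Fin 3 → ℝ) : ℝ := Real.sqrt (∑ i, (v i) ^ 2)

/-- The quantity `s(v) = |v|√(4|v| + π²|v|⁴) − π|v|³`. -/
def sfun (π : ℝ) (v : Fin 3 → ℝ) : ℝ :=
  enr v * Real.sqrt (4 * enr v + π ^ 2 * (enr v) ^ 4) - π * (enr v) ^ 3

/-- The (finite part of the) function `g_π(v) = 4/√(s(v)) + π√(s(v))` for `v ≠ 0`. -/
def gval (π : ℝ) (v : Fin 3 → ℝ) : ℝ :=
  4 / Real.sqrt (sfun π v) + π * Real.sqrt (sfun π v)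

open Filter

/-- `s` as a function of the radius. -/
def Sr (π r : ℝ) : ℝ := r * Real.sqrt (4 * r + π ^ 2 * r ^ 4) - π * r ^ 3

lemma sfun_eq (π : ℝ) (v : Fin 3 → ℝ) : sfun π v = Sr π (enr v) := rfl

lemma enr_pos {v : Fin 3 → ℝ} (hv : v ≠ 0) : 0 < enr v := by
  have h : ∃ i, v i ≠ 0 := by
    by_contra h; push_neg at h; exact hv (funext h)
  obtain ⟨i, hi⟩ := h
  apply Real.sqrt_pos.2
  have h1 : (0:ℝ) < (v i)^2 := by positivity
  have h2 : (v i)^2 ≤ ∑ j, (v j)^2 :=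
    Finset.single_le_sum (f := fun j => (v j)^2) (fun j _ => sq_nonneg _) (Finset.mem_univ i)
  linarith

lemma abs_le_enr (w : Fin 3 → ℝ) : |w 0| ≤ enr w := by
  have h2 : (w 0)^2 ≤ ∑ j, (w j)^2 :=
    Finset.single_le_sum (f := fun j => (w j)^2) (fun j _ => sq_nonneg _)
      (Finset.mem_univ (0 : Fin 3))
  calc |w 0| = Real.sqrt ((w 0)^2) := (Real.sqrt_sq_eq_abs _).symm
    _ ≤ enr w := Real.sqrt_le_sqrt h2

lemma Sr_sqrt (π : ℝ) {r : ℝ} (hr : 0 < r) :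
    r * Real.sqrt (4 * r + π ^ 2 * r ^ 4) = Real.sqrt (4 * r ^ 3 + π ^ 2 * r ^ 6) := by
  rw [show (4 * r ^ 3 + π ^ 2 * r ^ 6) = r ^ 2 * (4 * r + π ^ 2 * r ^ 4) by ring,
    Real.sqrt_mul (sq_nonneg r), Real.sqrt_sq hr.le]

lemma Sr_pos (π : ℝ) {r : ℝ} (hπ : 0 < π) (hr : 0 < r) : 0 < Sr π r := by
  unfold Sr
  rw [Sr_sqrt π hr, sub_pos]
  rw [show π * r ^ 3 = Real.sqrt ((π * r ^ 3) ^ 2) by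
    rw [Real.sqrt_sq (by positivity)]]
  apply Real.sqrt_lt_sqrt (by positivity)
  nlinarith [pow_pos hr 3]

lemma Sr_lt (π : ℝ) {r : ℝ} (hπ : 0 < π) (hr : 0 < r) : Sr π r < 2 / π := by
  unfold Sr
  rw [sub_lt_iff_lt_add, Sr_sqrt π hr]
  have hub : 0 < 2 / π + π * r ^ 3 := by positivity
  rw [show (2 / π + π * r ^ 3) = Real.sqrt ((2 / π + π * r ^ 3) ^ 2) by
    rw [Real.sqrt_sq hub.le]]
  apply Real.sqrt_lt_sqrt (by positivity)
  have hexp : (2 / π + π * r ^ 3) ^ 2 = 4 / π ^ 2 + 4 * r ^ 3 + π ^ 2 * r ^ 6 := by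
    field_simp; ring
  rw [hexp]
  have : 0 < 4 / π ^ 2 := by positivity
  linarith

lemma gbound (π : ℝ) (hπ : 0 < π) {s : ℝ} (hs : 0 < s) (hs2 : s < 2 / π) :
    3 * Real.sqrt (2 * π) < 4 / Real.sqrt s + π * Real.sqrt s := by
  set u := Real.sqrt s with hu
  set a := Real.sqrt (2 / π) with ha
  have hu0 : 0 < u := Real.sqrt_pos.2 hs
  have hua : u < a := Real.sqrt_lt_sqrt hs.le hs2
  have ha2 : a ^ 2 = 2 / π := Real.sq_sqrt (by positivity)
  have hpa : π * a ^ 2 = 2 := by rw [ha2]; field_simp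
  have hsq : Real.sqrt (2 * π) = π * a := by
    rw [ha, ← Real.sqrt_sq hπ.le, ← Real.sqrt_mul (by positivity)]
    congr 1
    field_simp
    ring
    exact Real.sq_sqrt (sq_nonneg π)
  rw [hsq]
  rw [show 4 / u + π * u = (4 + π * u ^ 2) / u by field_simp, lt_div_iff₀ hu0]
  nlinarith [mul_pos (mul_pos hπ (sub_pos.2 hua)) (show 0 < 2 * a - u by linarith)]

lemma sfun_pos (π : ℝ) (hπ : 0 < π) {v : Fin 3 → ℝ} (hv : v ≠ 0) : 0 < sfun π v := by
  rw [sfun_eq]; exact Sr_pos π hπ (enr_pos hv)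

lemma gval_gt (π : ℝ) (hπ : 0 < π) {v : Fin 3 → ℝ} (hv : v ≠ 0) :
    3 * Real.sqrt (2 * π) < gval π v := by
  have h1 := Sr_pos π hπ (enr_pos hv)
  have h2 := Sr_lt π hπ (enr_pos hv)
  unfold gval
  rw [sfun_eq]
  exact gbound π hπ h1 h2

lemma Sr_formula (π : ℝ) (hπ : 0 < π) {r : ℝ} (hr : 0 < r) :
    Sr π r = 4 / (Real.sqrt (4 / r ^ 3 + π ^ 2) + π) := by
  set Q := Real.sqrt (4 / r ^ 3 + π ^ 2) with hQdef
  have hQsq : Q ^ 2 = 4 / r ^ 3 + π ^ 2 := Real.sq_sqrt (by positivity)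
  have hQ0 : 0 ≤ Q := Real.sqrt_nonneg _
  have hden : 0 < Q + π := by linarith
  have hr3 : (0:ℝ) < r ^ 3 := by positivity
  have e2 : Real.sqrt (4 * r ^ 3 + π ^ 2 * r ^ 6) = r ^ 3 * Q := by
    rw [hQdef, ← Real.sqrt_sq hr3.le, ← Real.sqrt_mul (by positivity)]
    congr 1
    field_simp
    ring
    rw [Real.sq_sqrt (by positivity)]; ring
  have key : Sr π r * (Q + π) = 4 := by
    unfold Sr
    rw [Sr_sqrt π hr, e2]
    have : (r ^ 3 * Q - π * r ^ 3) * (Q + π) = r ^ 3 * (Q ^ 2 - π ^ 2) := by ring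
    rw [this, hQsq]
    field_simp
    ring
  field_simp
  linarith [key]

lemma Sr_tendsto (π : ℝ) (hπ : 0 < π) :
    Tendsto (fun r => Sr π r) atTop (nhds (2 / π)) := by
  have hpow : Tendsto (fun r : ℝ => r ^ 3) atTop atTop :=
    tendsto_pow_atTop (by norm_num)
  have h0 : Tendsto (fun r : ℝ => 4 / r ^ 3) atTop (nhds 0) :=
    Filter.Tendsto.div_atTop tendsto_const_nhds hpow
  have hcont : ContinuousAt (fun x : ℝ => 4 / (Real.sqrt (x + π ^ 2) + π)) 0 := by
    have hne : Real.sqrt (0 + π ^ 2) + π ≠ 0 := by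
      have : 0 ≤ Real.sqrt (0 + π ^ 2) := Real.sqrt_nonneg _
      positivity
    have hs : ContinuousAt (fun x : ℝ => Real.sqrt (x + π ^ 2)) 0 :=
      (Real.continuous_sqrt.comp (continuous_id.add continuous_const)).continuousAt
    exact continuousAt_const.div (hs.add continuousAt_const) hne
  have hcomp := hcont.tendsto.comp h0
  have hval : 4 / (Real.sqrt ((0:ℝ) + π ^ 2) + π) = 2 / π := by
    simp only [zero_add, Real.sqrt_sq hπ.le]
    rw [show π + π = 2 * π by ring]
    rw [div_eq_div_iff (by positivity) hπ.ne']
    ring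
  rw [hval] at hcomp
  apply hcomp.congr'
  filter_upwards [eventually_gt_atTop (0:ℝ)] with r hr
  exact (Sr_formula π hπ hr).symm

lemma gval_tendsto (π : ℝ) (hπ : 0 < π) {f : ℝ → Fin 3 → ℝ}
    (hf : Tendsto (fun t => enr (f t)) atTop atTop) :
    Tendsto (fun t => gval π (f t)) atTop (nhds (3 * Real.sqrt (2 * π))) := by
  have hsS : Tendsto (fun t => Sr π (enr (f t))) atTop (nhds (2 / π)) :=
    (Sr_tendsto π hπ).comp hf
  have hane : Real.sqrt (2 / π) ≠ 0 := by
    have : 0 < Real.sqrt (2 / π) := Real.sqrt_pos.2 (by positivity)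
    exact this.ne'
  have hGcont : ContinuousAt (fun s : ℝ => 4 / Real.sqrt s + π * Real.sqrt s) (2 / π) := by
    have h1 : ContinuousAt Real.sqrt (2 / π) := Real.continuous_sqrt.continuousAt
    exact (continuousAt_const.div h1 hane).add (continuousAt_const.mul h1)
  have hcomp := hGcont.tendsto.comp hsS
  have hval : 4 / Real.sqrt (2 / π) + π * Real.sqrt (2 / π) = 3 * Real.sqrt (2 * π) := by
    set a := Real.sqrt (2 / π) with ha
    have ha0 : 0 < a := Real.sqrt_pos.2 (by positivity)
    have hpa : π * a ^ 2 = 2 := by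
      rw [ha, Real.sq_sqrt (by positivity : (0:ℝ) ≤ 2 / π)]; field_simp
    have hsq : Real.sqrt (2 * π) = π * a := by
      rw [ha, ← Real.sqrt_sq hπ.le, ← Real.sqrt_mul (by positivity)]
      congr 1
      field_simp
      ring
      exact Real.sq_sqrt (sq_nonneg π)
    rw [hsq]
    have h4a : 4 / a = 2 * π * a := by
      rw [div_eq_iff ha0.ne']; nlinarith
    rw [h4a]; ring
  rw [hval] at hcomp
  exact hcomp.congr (fun t => by simp [gval, sfun_eq, Function.comp])

lemma minorant_le (π : ℝ) (hπ : 0 < π) (φ : (Fin 3 → ℝ) → ℝ)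
    (hconv : ConvexOn ℝ Set.univ φ)
    (hle : ∀ v : Fin 3 → ℝ, v ≠ 0 → φ v ≤ gval π v) (v : Fin 3 → ℝ) :
    φ v ≤ 3 * Real.sqrt (2 * π) := by
  classical
  set e₀ : Fin 3 → ℝ := fun i => if i = 0 then 1 else 0 with he₀
  have hcoord : ∀ t : ℝ, (v + t • e₀) 0 = v 0 + t := by
    intro t; simp [he₀]
  have hcoord' : ∀ t : ℝ, (v - t • e₀) 0 = v 0 - t := by
    intro t; simp [he₀]
  -- tendsto of norms
  have hlin : Tendsto (fun t : ℝ => t - |v 0|) atTop atTop := by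
    simpa [sub_eq_add_neg] using
      tendsto_atTop_add_const_right atTop (-|v 0|) (tendsto_id (α := ℝ))
  have htp : Tendsto (fun t : ℝ => enr (v + t • e₀)) atTop atTop := by
    apply tendsto_atTop_mono (fun t => ?_) hlin
    calc t - |v 0| ≤ |v 0 + t| := by
          have h1 := le_abs_self (v 0 + t)
          have h2 := neg_abs_le (v 0)
          linarith
      _ = |(v + t • e₀) 0| := by rw [hcoord]
      _ ≤ enr (v + t • e₀) := abs_le_enr _
  have htm : Tendsto (fun t : ℝ => enr (v - t • e₀)) atTop atTop := by
    apply tendsto_atTop_mono (fun t => ?_) hlin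
    calc t - |v 0| ≤ |v 0 - t| := by
          have h1 := neg_le_abs (v 0 - t)
          have h2 := le_abs_self (v 0)
          linarith
      _ = |(v - t • e₀) 0| := by rw [hcoord']
      _ ≤ enr (v - t • e₀) := abs_le_enr _
  have hgp := gval_tendsto π hπ htp
  have hgm := gval_tendsto π hπ htm
  have htend : Tendsto (fun t : ℝ => (gval π (v + t • e₀) + gval π (v - t • e₀)) / 2)
      atTop (nhds (3 * Real.sqrt (2 * π))) := by
    have := (hgp.add hgm).div_const 2
    have heq : (3 * Real.sqrt (2 * π) + 3 * Real.sqrt (2 * π)) / 2 = 3 * Real.sqrt (2 * π) := by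
      ring
    rwa [heq] at this
  apply ge_of_tendsto htend
  filter_upwards [eventually_gt_atTop (|v 0|)] with t ht
  have hne1 : v + t • e₀ ≠ 0 := by
    intro h
    have : (v + t • e₀) 0 = 0 := by rw [h]; rfl
    rw [hcoord] at this
    have := le_abs_self (v 0)
    have := neg_abs_le (v 0)
    linarith
  have hne2 : v - t • e₀ ≠ 0 := by
    intro h
    have : (v - t • e₀) 0 = 0 := by rw [h]; rfl
    rw [hcoord'] at this
    have := le_abs_self (v 0)
    have := neg_abs_le (v 0)
    linarith
  have hmid : (1/2 : ℝ) • (v + t • e₀) + (1/2 : ℝ) • (v - t • e₀) = v := by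
    funext i
    simp only [Pi.add_apply, Pi.smul_apply, Pi.sub_apply, smul_eq_mul]
    ring
  have hcv := hconv.2 (Set.mem_univ (v + t • e₀)) (Set.mem_univ (v - t • e₀))
    (by norm_num : (0:ℝ) ≤ 1/2) (by norm_num : (0:ℝ) ≤ 1/2) (by norm_num)
  rw [hmid] at hcv
  have hb1 := hle _ hne1
  have hb2 := hle _ hne2
  calc φ v ≤ (1/2 : ℝ) * φ (v + t • e₀) + (1/2 : ℝ) * φ (v - t • e₀) := hcv
    _ ≤ (1/2 : ℝ) * gval π (v + t • e₀) + (1/2 : ℝ) * gval π (v - t • e₀) := by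
        gcongr <;> norm_num
    _ = (gval π (v + t • e₀) + gval π (v - t • e₀)) / 2 := by ring

/-- For `π > 0`: `s(v) > 0` and `g_π(v) > 3√(2π)` for `v ≠ 0`; every convex minorant of `g_π`
is everywhere `≤ 3√(2π)`; and the pointwise supremum of the convex minorants of `g_π` is the
constant `3√(2π)` (which is itself a convex minorant, `g_π(0) = +∞` imposing no constraint). -/
theorem stmt14 (π : ℝ) (hπ : 0 < π) :
    (∀ v : Fin 3 → ℝ, v ≠ 0 → 0 < sfun π v) ∧
    (∀ v : Fin 3 → ℝ, v ≠ 0 → 3 * Real.sqrt (2 * π) < gval π v) ∧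
    (∀ φ : (Fin 3 → ℝ) → ℝ, ConvexOn ℝ Set.univ φ →
      (∀ v : Fin 3 → ℝ, v ≠ 0 → φ v ≤ gval π v) →
      ∀ v : Fin 3 → ℝ, φ v ≤ 3 * Real.sqrt (2 * π)) ∧
    (∀ v : Fin 3 → ℝ,
      IsGreatest
        {y : ℝ | ∃ φ : (Fin 3 → ℝ) → ℝ, ConvexOn ℝ Set.univ φ ∧
          (∀ w : Fin 3 → ℝ, w ≠ 0 → φ w ≤ gval π w) ∧ y = φ v}
        (3 * Real.sqrt (2 * π))) := by
  refine ⟨fun v hv => sfun_pos π hπ hv, fun v hv => gval_gt π hπ hv,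
    fun φ hconv hle v => minorant_le π hπ φ hconv hle v, fun v => ⟨?_, ?_⟩⟩
  · exact ⟨fun _ => 3 * Real.sqrt (2 * π), convexOn_const _ convex_univ,
      fun w hw => (gval_gt π hπ hw).le, rfl⟩
  · rintro y ⟨φ, hconv, hle, rfl⟩
    exact minorant_le π hπ φ hconv hle v
end
end

section
/- Let ρ : ℝ → (−∞, +∞] be an even function bounded from below, and define g : ℝ³ → (−∞, +∞] by g(v) = ρ(|v|). Then for every v ∈ ℝ³, sup { φ(v) : φ : ℝ³ → ℝ convex, φ(w) ≤ g(w) for all w ∈ ℝ³ } = sup { ψ(|v|) : ψ : ℝ → ℝ convex, ψ(t) ≤ ρ(t) for all t ∈ ℝ }; that is, the convex envelope of the radial function g is the radial function whose profile is the convex envelope of ρ. -/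
noncomputable section

lemma enr_eq_norm (w : Fin 3 → ℝ) :
    enr w = ‖(WithLp.equiv 2 (Fin 3 → ℝ)).symm w‖ := by
  rw [EuclideanSpace.norm_eq]
  unfold enr
  congr 1
  refine Finset.sum_congr rfl fun i _ => ?_
  simp [Real.norm_eq_abs, sq_abs]

lemma enr_nonneg (w : Fin 3 → ℝ) : 0 ≤ enr w := Real.sqrt_nonneg _

lemma enr_smul (c : ℝ) (w : Fin 3 → ℝ) : enr (c • w) = |c| * enr w := by
  rw [enr_eq_norm, enr_eq_norm]
  rw [show (WithLp.equiv 2 (Fin 3 → ℝ)).symm (c • w)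
      = c • (WithLp.equiv 2 (Fin 3 → ℝ)).symm w by simp]
  rw [norm_smul, Real.norm_eq_abs]

lemma enr_add_le (x y : Fin 3 → ℝ) : enr (x + y) ≤ enr x + enr y := by
  rw [enr_eq_norm, enr_eq_norm, enr_eq_norm]
  rw [show (WithLp.equiv 2 (Fin 3 → ℝ)).symm (x + y)
      = (WithLp.equiv 2 (Fin 3 → ℝ)).symm x + (WithLp.equiv 2 (Fin 3 → ℝ)).symm y by simp]
  exact norm_add_le _ _

lemma enr_eq_zero {v : Fin 3 → ℝ} (h : enr v = 0) : v = 0 := by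
  rw [enr_eq_norm, norm_eq_zero] at h
  have := congrArg (WithLp.equiv 2 (Fin 3 → ℝ)) h
  simpa using this

/-- The convex envelope of a radial function `g(v) = ρ(|v|)`, with `ρ` even and bounded below,
is radial, with profile the convex envelope of `ρ`: at every point `v`, the supremum of the
values of the convex minorants of `g` equals the supremum of the values at `|v|` of the convex
minorants of `ρ`. -/
theorem stmt15 (ρ : ℝ → EReal) (heven : ∀ t : ℝ, ρ (-t) = ρ t)
    (hbdd : ∃ m : ℝ, ∀ t : ℝ, (m : EReal) ≤ ρ t) :
    ∀ v : Fin 3 → ℝ,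
      sSup {y : ℝ | ∃ φ : (Fin 3 → ℝ) → ℝ, ConvexOn ℝ Set.univ φ ∧
          (∀ w : Fin 3 → ℝ, ((φ w : ℝ) : EReal) ≤ ρ (enr w)) ∧ y = φ v}
        = sSup {y : ℝ | ∃ ψ : ℝ → ℝ, ConvexOn ℝ Set.univ ψ ∧
            (∀ t : ℝ, ((ψ t : ℝ) : EReal) ≤ ρ t) ∧ y = ψ (enr v)} := by
  have habs : ∀ t : ℝ, ρ |t| = ρ t := by
    intro t
    rcases abs_cases t with ⟨h, _⟩ | ⟨h, _⟩
    · rw [h]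
    · rw [h, heven]
  intro v
  apply csSup_eq_csSup_of_forall_exists_le
  · -- every minorant value of g is a minorant value of ρ
    rintro x ⟨φ, hφ, hφle, rfl⟩
    set e : Fin 3 → ℝ :=
      if v = 0 then (fun i => if i = 0 then (1 : ℝ) else 0) else (enr v)⁻¹ • v with he
    have he1 : enr e = 1 := by
      by_cases h : v = 0
      · simp only [he, if_pos h]
        unfold enr
        rw [Fin.sum_univ_three]
        norm_num [Fin.ext_iff]
      · have hv : enr v ≠ 0 := fun hc => h (enr_eq_zero hc)
        simp only [he, if_neg h, enr_smul]
        rw [abs_of_nonneg (inv_nonneg.2 (enr_nonneg v)), inv_mul_cancel₀ hv]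
    have hev : (enr v) • e = v := by
      by_cases h : v = 0
      · have h0 : enr v = 0 := by
          rw [h]; unfold enr; simp
        rw [h0, zero_smul, h]
      · have hv : enr v ≠ 0 := fun hc => h (enr_eq_zero hc)
        simp only [he, if_neg h, smul_smul]
        rw [mul_inv_cancel₀ hv, one_smul]
    refine ⟨φ v, ⟨fun t => φ (t • e), ?_, ?_, ?_⟩, le_refl _⟩
    · refine ⟨convex_univ, fun x _ y _ a b ha hb hab => ?_⟩
      have hcomb : (a • x + b • y) • e = a • (x • e) + b • (y • e) := by
        simp only [smul_eq_mul, add_smul, smul_smul]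
      simp only
      rw [hcomb]
      exact hφ.2 (Set.mem_univ _) (Set.mem_univ _) ha hb hab
    · intro t
      have := hφle (t • e)
      rwa [enr_smul, he1, mul_one, habs] at this
    · simp only
      rw [hev]
  · -- every minorant value of ρ is dominated by a minorant value of g
    rintro y ⟨ψ, hψ, hψle, rfl⟩
    set χ : ℝ → ℝ := fun t => max (ψ t) (ψ (-t)) with hχ
    have hχeven : ∀ t, χ (-t) = χ t := by
      intro t; simp only [hχ, neg_neg, max_comm]
    have hχconv : ConvexOn ℝ Set.univ χ := by
      refine ⟨convex_univ, fun x _ y' _ a b ha hb hab => ?_⟩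
      simp only [hχ]
      apply max_le
      · refine le_trans (hψ.2 (Set.mem_univ x) (Set.mem_univ y') ha hb hab) ?_
        exact add_le_add (smul_le_smul_of_nonneg_left (le_max_left _ _) ha)
          (smul_le_smul_of_nonneg_left (le_max_left _ _) hb)
      · have hneg : -(a • x + b • y') = a • (-x) + b • (-y') := by
          rw [smul_neg, smul_neg, ← neg_add]
        rw [hneg]
        refine le_trans (hψ.2 (Set.mem_univ (-x)) (Set.mem_univ (-y')) ha hb hab) ?_
        exact add_le_add (smul_le_smul_of_nonneg_left (le_max_right _ _) ha)
          (smul_le_smul_of_nonneg_left (le_max_right _ _) hb)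
    have hmono : ∀ s t : ℝ, 0 ≤ s → s ≤ t → χ s ≤ χ t := by
      intro s t hs hst
      rcases eq_or_lt_of_le (hs.trans hst) with h | ht0
      · have hs0 : s = 0 := le_antisymm (hst.trans h.symm.le) hs
        rw [hs0, ← h]
      · set a := (t + s) / (2 * t) with ha'
        set b := (t - s) / (2 * t) with hb'
        have ha : 0 ≤ a := div_nonneg (by linarith) (by linarith)
        have hb : 0 ≤ b := div_nonneg (by linarith) (by linarith)
        have hab : a + b = 1 := by
          rw [ha', hb']; field_simp; ring
        have hcomb : a • t + b • (-t) = s := by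
          rw [ha', hb', smul_eq_mul, smul_eq_mul, div_mul_eq_mul_div, div_mul_eq_mul_div, ← add_div,
            div_eq_iff (mul_ne_zero two_ne_zero ht0.ne')]; ring
        calc χ s = χ (a • t + b • (-t)) := by rw [hcomb]
          _ ≤ a • χ t + b • χ (-t) :=
              hχconv.2 (Set.mem_univ t) (Set.mem_univ (-t)) ha hb hab
          _ = χ t := by rw [hχeven, ← add_smul, hab, one_smul]
    refine ⟨χ (enr v), ⟨fun w => χ (enr w), ?_, ?_, rfl⟩, le_max_left _ _⟩
    · refine ⟨convex_univ, fun x _ y' _ a b ha hb hab => ?_⟩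
      have h1 : enr (a • x + b • y') ≤ a * enr x + b * enr y' := by
        calc enr (a • x + b • y') ≤ enr (a • x) + enr (b • y') := enr_add_le _ _
          _ = a * enr x + b * enr y' := by
              rw [enr_smul, enr_smul, abs_of_nonneg ha, abs_of_nonneg hb]
      refine le_trans (hmono _ _ (enr_nonneg _) h1) ?_
      have := hχconv.2 (Set.mem_univ (enr x)) (Set.mem_univ (enr y')) ha hb hab
      simpa [smul_eq_mul] using this
    · intro w
      have h1 : ((ψ (enr w) : ℝ) : EReal) ≤ ρ (enr w) := hψle _
      have h2 : ((ψ (-enr w) : ℝ) : EReal) ≤ ρ (enr w) := by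
        rw [← heven]; exact hψle _
      rcases max_cases (ψ (enr w)) (ψ (-enr w)) with ⟨h, _⟩ | ⟨h, _⟩ <;>
        simp only [hχ] <;> rw [h]
      · exact h1
      · exact h2
end
end
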